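/- arXiv:1805.02945 — 2 statements merged into one kernel-verified Lean document; each statement's English description precedes it below -/
import Mathlib

section
/- For every ε > 0 there exists a constant C = C(ε) > 0 such that for all positive integers m and n, f₃(m,n) ≤ C · n^(1+ε)/m. -/
/-- `numSols k m n` is the number of nondecreasing `k`-tuples of positive integers
`(a₁, …, a_k)` with `m / n = 1/a₁ + ⋯ + 1/a_k`. -/
noncomputable def numSols (k m n : ℕ) : ℕ :=
  Nat.card {a : Fin k → ℕ // (∀ i, 0 < a i) ∧ Monotone a ∧
    (m : ℚ) / n = ∑ i, (1 : ℚ) / a i}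

open Real Finset

lemma one_add_le_aux {t : ℝ} (ht : 0 < t) (ht1 : t ≤ 1) (x : ℝ) (hx : 0 ≤ x) :
    1 + x ≤ (1/t) * Real.exp (t * x) := by
  have h := Real.add_one_le_exp (t * x)
  have h1t : 1 ≤ 1/t := by rw [le_div_iff₀ ht]; simpa
  calc 1 + x ≤ 1/t + x := by linarith
    _ ≤ (1/t) * (t*x + 1) := by
        rw [mul_add, mul_one]
        have : (1/t) * (t*x) = x := by field_simp
        rw [this]; linarith
    _ ≤ (1/t) * Real.exp (t*x) := by
        apply mul_le_mul_of_nonneg_left h (by positivity)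

lemma divisor_bound (ε : ℝ) (hε : 0 < ε) : ∃ C : ℝ, 0 < C ∧
    ∀ N : ℕ, 0 < N → (N.divisors.card : ℝ) ≤ C * (N : ℝ) ^ ε := by
  set t : ℝ := min (ε * Real.log 2) 1 with ht_def
  have hlog2 : 0 < Real.log 2 := Real.log_pos (by norm_num)
  have ht : 0 < t := lt_min (by positivity) one_pos
  have ht1 : t ≤ 1 := min_le_right _ _
  set M : ℝ := max 1 (1/t) with hM_def
  have hM1 : 1 ≤ M := le_max_left _ _
  set P : ℕ := ⌈(2:ℝ) ^ (1/ε)⌉₊ + 1 with hP_def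
  refine ⟨M ^ P, by positivity, fun N hN => ?_⟩
  have hN0 : N ≠ 0 := hN.ne'
  rw [Nat.card_divisors hN0]
  -- pointwise bound
  have key : ∀ p ∈ N.primeFactors,
      ((N.factorization p + 1 : ℕ) : ℝ) ≤
        (if p < P then M else 1) * (((p ^ N.factorization p : ℕ) : ℝ)) ^ ε := by
    intro p hp
    have hpp : p.Prime := Nat.prime_of_mem_primeFactors hp
    have hp2 : (2:ℝ) ≤ (p:ℝ) := by exact_mod_cast hpp.two_le
    set k : ℕ := N.factorization p with hk
    have hcast : (((p ^ k : ℕ) : ℝ)) ^ ε = ((p:ℝ)) ^ ((k:ℝ) * ε) := by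
      push_cast
      rw [← Real.rpow_natCast (p:ℝ) k, ← Real.rpow_mul (by linarith)]
    rw [hcast]
    by_cases hsmall : p < P
    · simp only [hsmall, if_true]
      have h1 : (1 : ℝ) + k ≤ (1/t) * Real.exp (t * k) :=
        one_add_le_aux ht ht1 k (by positivity)
      have h2 : Real.exp (t * k) ≤ Real.exp (ε * Real.log 2 * k) := by
        apply Real.exp_le_exp.2
        apply mul_le_mul_of_nonneg_right (min_le_left _ _) (by positivity)
      have h3 : Real.exp (ε * Real.log 2 * k) = (2:ℝ) ^ ((k:ℝ) * ε) := by
        rw [Real.rpow_def_of_pos (by norm_num)]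
        ring_nf
      have h4 : (2:ℝ) ^ ((k:ℝ) * ε) ≤ (p:ℝ) ^ ((k:ℝ) * ε) :=
        Real.rpow_le_rpow (by norm_num) hp2 (by positivity)
      have hM2 : 1/t ≤ M := le_max_right _ _
      push_cast
      calc (k : ℝ) + 1 = 1 + k := by ring
        _ ≤ (1/t) * Real.exp (t * k) := h1
        _ ≤ (1/t) * (2:ℝ) ^ ((k:ℝ) * ε) := by
            rw [← h3] at *
            exact mul_le_mul_of_nonneg_left h2 (by positivity)
        _ ≤ M * (p:ℝ) ^ ((k:ℝ) * ε) := by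
            apply mul_le_mul hM2 h4 (by positivity) (by linarith)
    · simp only [hsmall, if_false, one_mul]
      -- p ≥ P so p^ε ≥ 2
      have hpP : (P : ℝ) ≤ (p:ℝ) := by exact_mod_cast Nat.le_of_not_lt hsmall
      have h2p : (2:ℝ) ^ (1/ε) < (p:ℝ) := by
        calc (2:ℝ) ^ (1/ε) ≤ ⌈(2:ℝ) ^ (1/ε)⌉₊ := Nat.le_ceil _
          _ < (P : ℝ) := by rw [hP_def]; push_cast; linarith
          _ ≤ (p:ℝ) := hpP
      have hpe : (2:ℝ) ≤ (p:ℝ) ^ ε := by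
        have := Real.rpow_le_rpow (by positivity) h2p.le hε.le
        rwa [← Real.rpow_mul (by norm_num), one_div_mul_cancel hε.ne',
          Real.rpow_one] at this
      have : ((k:ℝ) + 1) ≤ (2:ℝ) ^ k := by
        exact_mod_cast Nat.succ_le_of_lt (Nat.lt_two_pow_self (n := k))
      calc ((k + 1 : ℕ) : ℝ) = (k:ℝ) + 1 := by push_cast; ring
        _ ≤ (2:ℝ) ^ k := this
        _ ≤ ((p:ℝ) ^ ε) ^ k := pow_le_pow_left₀ (by norm_num) hpe k
        _ = (p:ℝ) ^ ((k:ℝ) * ε) := by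
            rw [← Real.rpow_natCast ((p:ℝ)^ε) k, ← Real.rpow_mul (by positivity)]
            ring_nf
  -- combine
  have hprodle : ((N.primeFactors.prod (N.factorization · + 1) : ℕ) : ℝ) ≤
      ∏ p ∈ N.primeFactors,
        ((if p < P then M else 1) * (((p ^ N.factorization p : ℕ) : ℝ)) ^ ε) := by
    push_cast
    apply Finset.prod_le_prod (fun p _ => by positivity)
    intro p hp
    have := key p hp
    push_cast at this ⊢
    exact this
  refine hprodle.trans ?_
  rw [Finset.prod_mul_distrib]
  have hsplit2 : ∏ p ∈ N.primeFactors, (((p ^ N.factorization p : ℕ) : ℝ)) ^ ε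
      = ((N : ℝ)) ^ ε := by
    rw [Real.finset_prod_rpow _ _ (fun p _ => by positivity)]
    congr 1
    rw [← Nat.cast_prod]
    congr 1
    rw [← Nat.prod_factorization_eq_prod_primeFactors (fun p k => p ^ k)]
    exact Nat.factorization_prod_pow_eq_self hN0
  rw [hsplit2]
  apply mul_le_mul_of_nonneg_right _ (by positivity)
  -- ∏ ite ≤ M ^ P
  calc ∏ p ∈ N.primeFactors, (if p < P then M else 1)
      ≤ ∏ p ∈ N.primeFactors.filter (· < P), M := by
        rw [Finset.prod_ite]
        simp
    _ = M ^ (N.primeFactors.filter (· < P)).card := by rw [Finset.prod_const]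
    _ ≤ M ^ P := by
        apply pow_le_pow_right₀ hM1
        calc (N.primeFactors.filter (· < P)).card ≤ (Finset.range P).card := by
              apply Finset.card_le_card
              intro x hx
              simp only [Finset.mem_filter] at hx
              exact Finset.mem_range.2 hx.2
          _ = P := Finset.card_range P


lemma key_facts (m n A B C : ℕ) (hm : 0 < m) (hn : 0 < n)
    (hA : 0 < A) (hB : 0 < B) (hC : 0 < C) (hAB : A ≤ B) (hBC : B ≤ C)
    (heq : (m : ℚ) / n = 1/A + 1/B + 1/C) :
    m * A ≤ 3 * n ∧ n < m * A ∧ n * A < (m * A - n) * B ∧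
      (m * A - n) * B ≤ (m * A - n) * C ∧
      ((m * A - n) * B - n * A) * ((m * A - n) * C - n * A) = (n * A)^2 := by
  have hnQ : (0:ℚ) < n := by exact_mod_cast hn
  have hAQ : (0:ℚ) < A := by exact_mod_cast hA
  have hBQ : (0:ℚ) < B := by exact_mod_cast hB
  have hCQ : (0:ℚ) < C := by exact_mod_cast hC
  have hABQ : (A:ℚ) ≤ B := by exact_mod_cast hAB
  have hBCQ : (B:ℚ) ≤ C := by exact_mod_cast hBC
  have h1B : (1:ℚ)/B ≤ 1/A := one_div_le_one_div_of_le hAQ hABQ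
  have h1C : (1:ℚ)/C ≤ 1/B := one_div_le_one_div_of_le hBQ hBCQ
  -- claim 1 : m * A ≤ 3 * n
  have c1 : m * A ≤ 3 * n := by
    have h3 : (m:ℚ)/n ≤ 3/A := by
      have e : (3:ℚ)/A = 1/A + 1/A + 1/A := by ring
      rw [heq, e]; linarith
    have := (div_le_div_iff₀ hnQ hAQ).1 h3
    have : (m:ℚ) * A ≤ 3 * n := by linarith
    exact_mod_cast this
  -- claim 2 : n < m * A
  have c2Q : (n:ℚ) < m * A := by
    have h0 : (1:ℚ)/A < (m:ℚ)/n := by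
      rw [heq]
      have h1 : (0:ℚ) < 1/B + 1/C := by positivity
      linarith
    have := (div_lt_div_iff₀ hAQ hnQ).1 h0
    linarith
  have c2 : n < m * A := by exact_mod_cast c2Q
  -- claim 3 : n * A < (m * A - n) * B
  have c3 : n * A < (m * A - n) * B := by
    have h0 : (1:ℚ)/B < (m:ℚ)/n - 1/A := by
      rw [heq]
      have h1 : (0:ℚ) < 1/C := by positivity
      linarith
    have h1 : (n:ℚ) * A < ((m:ℚ) * A - n) * B := by
      rw [div_sub_div _ _ hnQ.ne' hAQ.ne', div_lt_div_iff₀ hBQ (by positivity)] at h0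
      nlinarith
    have h2 : ((n * A : ℕ) : ℚ) < (((m * A - n) * B : ℕ) : ℚ) := by
      push_cast [Nat.cast_sub c2.le]
      nlinarith
    exact_mod_cast h2
  have c4 : (m * A - n) * B ≤ (m * A - n) * C := Nat.mul_le_mul_left _ hBC
  -- claim 5 : product identity
  have heq2 : (m:ℚ) * (A * B * C) = n * (B * C + A * C + A * B) := by
    field_simp at heq
    linarith [heq]
  have c5Q : (((m:ℚ) * A - n) * B - n * A) * (((m:ℚ) * A - n) * C - n * A)
      = ((n:ℚ) * A)^2 := by linear_combination ((m:ℚ) * A - n) * heq2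
  have c5 : ((m * A - n) * B - n * A) * ((m * A - n) * C - n * A) = (n * A)^2 := by
    have h1 : n * A ≤ (m * A - n) * B := c3.le
    have h2 : n * A ≤ (m * A - n) * C := h1.trans c4
    have hq : (((((m * A - n) * B - n * A) * ((m * A - n) * C - n * A)) : ℕ) : ℚ)
        = (((n * A)^2 : ℕ) : ℚ) := by
      push_cast [Nat.cast_sub h1, Nat.cast_sub h2, Nat.cast_sub c2.le]
      linear_combination c5Q
    exact_mod_cast hq
  exact ⟨c1, c2, c3, c4, c5⟩

lemma numSols_le_sum (m n : ℕ) (hm : 0 < m) (hn : 0 < n) :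
    numSols 3 m n ≤ ∑ a ∈ Finset.Icc 1 (3 * n / m), ((n * a)^2).divisors.card := by
  classical
  set S : Finset ((_ : ℕ) × ℕ) :=
    (Finset.Icc 1 (3 * n / m)).sigma (fun a => ((n * a)^2).divisors) with hS
  have hcard : S.card = ∑ a ∈ Finset.Icc 1 (3 * n / m), ((n * a)^2).divisors.card :=
    Finset.card_sigma _ _
  rw [← hcard, ← Nat.card_eq_finsetCard]
  unfold numSols
  have hφmem : ∀ a : Fin 3 → ℕ, (∀ i, 0 < a i) → Monotone a →
      ((m : ℚ) / n = ∑ i, (1 : ℚ) / a i) →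
      (⟨a 0, (m * a 0 - n) * a 1 - n * a 0⟩ : (_ : ℕ) × ℕ) ∈ S := by
    intro a ha hmono heq
    have heq' : (m : ℚ) / n = 1/(a 0) + 1/(a 1) + 1/(a 2) := by
      rw [heq, Fin.sum_univ_three]
    obtain ⟨c1, c2, c3, c4, c5⟩ := key_facts m n (a 0) (a 1) (a 2) hm hn
      (ha 0) (ha 1) (ha 2) (hmono (by decide : (0:Fin 3) ≤ 1))
      (hmono (by decide : (1:Fin 3) ≤ 2)) heq'
    rw [hS]
    simp only [Finset.mem_sigma, Finset.mem_Icc, Nat.mem_divisors]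
    refine ⟨⟨ha 0, ?_⟩, ?_, ?_⟩
    · rw [Nat.le_div_iff_mul_le hm]; linarith [c1]
    · exact ⟨_, c5.symm⟩
    · exact pow_ne_zero _ (Nat.mul_ne_zero hn.ne' (ha 0).ne')
  let φ : {a : Fin 3 → ℕ // (∀ i, 0 < a i) ∧ Monotone a ∧
      (m : ℚ) / n = ∑ i, (1 : ℚ) / a i} → {x // x ∈ S} :=
    fun s => ⟨⟨s.1 0, (m * s.1 0 - n) * s.1 1 - n * s.1 0⟩,
      hφmem s.1 s.2.1 s.2.2.1 s.2.2.2⟩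
  have hinj : Function.Injective φ := by
    rintro ⟨x, hx, hxm, hxe⟩ ⟨y, hy, hym, hye⟩ hxy
    simp only [φ, Subtype.mk.injEq, Sigma.mk.inj_iff, heq_eq_eq] at hxy
    obtain ⟨h0, h1⟩ := hxy
    have hxe' : (m : ℚ) / n = 1/(x 0) + 1/(x 1) + 1/(x 2) := by
      rw [hxe, Fin.sum_univ_three]
    have hye' : (m : ℚ) / n = 1/(y 0) + 1/(y 1) + 1/(y 2) := by
      rw [hye, Fin.sum_univ_three]
    obtain ⟨_, cx2, cx3, _, _⟩ := key_facts m n (x 0) (x 1) (x 2) hm hn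
      (hx 0) (hx 1) (hx 2) (hxm (by decide : (0:Fin 3) ≤ 1))
      (hxm (by decide : (1:Fin 3) ≤ 2)) hxe'
    obtain ⟨_, cy2, cy3, _, _⟩ := key_facts m n (y 0) (y 1) (y 2) hm hn
      (hy 0) (hy 1) (hy 2) (hym (by decide : (0:Fin 3) ≤ 1))
      (hym (by decide : (1:Fin 3) ≤ 2)) hye'
    rw [h0] at cx3 h1
    have hBeq : x 1 = y 1 := by
      have hpq : (m * y 0 - n) * x 1 = (m * y 0 - n) * y 1 := by
        have e := congrArg (· + n * y 0) h1
        simpa [Nat.sub_add_cancel cx3.le, Nat.sub_add_cancel cy3.le] using e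
      exact Nat.eq_of_mul_eq_mul_left (Nat.sub_pos_of_lt cy2) hpq
    have hCeq : x 2 = y 2 := by
      have h2 : (1:ℚ)/(x 2) = 1/(y 2) := by
        rw [hxe'] at hye'
        rw [h0, hBeq] at hye'
        linarith
      have hx2 : (0:ℚ) < x 2 := by exact_mod_cast hx 2
      have hy2 : (0:ℚ) < y 2 := by exact_mod_cast hy 2
      have h3 : ((x 2 : ℕ):ℚ) = y 2 := by
        field_simp at h2
        first | exact_mod_cast h2 | exact_mod_cast h2.symm
      exact_mod_cast h3
    apply Subtype.ext
    funext i
    fin_cases i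
    · exact h0
    · exact hBeq
    · exact hCeq
  exact Nat.card_le_card_of_injective φ hinj

theorem stmt_15 : ∀ ε : ℝ, 0 < ε → ∃ C : ℝ, 0 < C ∧
    ∀ m n : ℕ, 0 < m → 0 < n →
      (numSols 3 m n : ℝ) ≤ C * (n : ℝ) ^ (1 + ε) / (m : ℝ) := by
  intro ε hε
  obtain ⟨C₁, hC₁, hdiv⟩ := divisor_bound (ε/4) (by linarith)
  refine ⟨3 * C₁ * (9:ℝ) ^ (ε/4), by positivity, ?_⟩
  intro m n hm hn
  have hnR : (0:ℝ) < n := by exact_mod_cast hn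
  have hmR : (0:ℝ) < m := by exact_mod_cast hm
  have hkey := numSols_le_sum m n hm hn
  set A := 3 * n / m with hA
  have step1 : (numSols 3 m n : ℝ) ≤
      ∑ a ∈ Finset.Icc 1 A, (((n*a)^2).divisors.card : ℝ) := by
    rw [← Nat.cast_sum]
    exact_mod_cast hkey
  have bound_each : ∀ a ∈ Finset.Icc 1 A,
      (((n*a)^2).divisors.card : ℝ) ≤ C₁ * ((9:ℝ) ^ (ε/4) * (n:ℝ) ^ ε) := by
    intro a haIcc
    obtain ⟨ha1, ha2⟩ := Finset.mem_Icc.1 haIcc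
    have hpos : 0 < (n*a)^2 := by positivity
    have ha3n : a ≤ 3 * n := ha2.trans (Nat.div_le_self _ _)
    have hle : ((n*a)^2 : ℕ) ≤ 9 * n^4 := by
      calc (n*a)^2 ≤ (n*(3*n))^2 := Nat.pow_le_pow_left (Nat.mul_le_mul_left n ha3n) 2
        _ = 9 * n^4 := by ring
    have h2 : (((n*a)^2 : ℕ) : ℝ) ^ (ε/4) ≤ ((9 * n^4 : ℕ) : ℝ) ^ (ε/4) :=
      Real.rpow_le_rpow (by positivity) (by exact_mod_cast hle) (by positivity)
    have h3 : ((9 * n^4 : ℕ) : ℝ) ^ (ε/4) = (9:ℝ) ^ (ε/4) * (n:ℝ) ^ ε := by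
      push_cast
      rw [Real.mul_rpow (by norm_num) (by positivity),
        ← Real.rpow_natCast (n:ℝ) 4, ← Real.rpow_mul hnR.le,
        show ((4:ℕ):ℝ) * (ε/4) = ε by push_cast; ring]
    rw [h3] at h2
    calc (((n*a)^2).divisors.card : ℝ) ≤ C₁ * (((n*a)^2 : ℕ) : ℝ) ^ (ε/4) := by
          have := hdiv ((n*a)^2) hpos; exact_mod_cast this
      _ ≤ C₁ * ((9:ℝ) ^ (ε/4) * (n:ℝ) ^ ε) :=
          mul_le_mul_of_nonneg_left h2 hC₁.le
  have step2 : ∑ a ∈ Finset.Icc 1 A, (((n*a)^2).divisors.card : ℝ) ≤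
      (A : ℝ) * (C₁ * ((9:ℝ) ^ (ε/4) * (n:ℝ) ^ ε)) := by
    have := Finset.sum_le_card_nsmul (Finset.Icc 1 A) _ _ bound_each
    rwa [Nat.card_Icc, Nat.add_sub_cancel, nsmul_eq_mul] at this
  have hAle : (A : ℝ) ≤ 3 * n / m := by
    calc (A : ℝ) ≤ ((3 * n : ℕ) : ℝ) / (m : ℝ) := Nat.cast_div_le
      _ = 3 * n / m := by push_cast; ring
  calc (numSols 3 m n : ℝ) ≤ (A : ℝ) * (C₁ * ((9:ℝ) ^ (ε/4) * (n:ℝ) ^ ε)) :=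
        step1.trans step2
    _ ≤ (3 * n / m) * (C₁ * ((9:ℝ) ^ (ε/4) * (n:ℝ) ^ ε)) :=
        mul_le_mul_of_nonneg_right hAle (by positivity)
    _ = 3 * C₁ * (9:ℝ) ^ (ε/4) * (n : ℝ) ^ (1 + ε) / (m : ℝ) := by
        rw [Real.rpow_add hnR, Real.rpow_one]; ring
end

section
/- For every ε > 0 there exists a constant C = C(ε) > 0 such that for all positive integers m and n, f₄(m,n) ≤ C · n^(3+ε)/m². -/
open Finset in
lemma divisor_bound_s16 {δ : ℝ} (hδ : 0 < δ) :
    ∃ C : ℝ, 1 ≤ C ∧ ∀ k : ℕ, k ≠ 0 → (k.divisors.card : ℝ) ≤ C * (k : ℝ) ^ δ := by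
  have h2 : (1:ℝ) < (2:ℝ) ^ δ := by
    rw [show (1:ℝ) = (2:ℝ) ^ (0:ℝ) by simp]
    exact Real.rpow_lt_rpow_left_iff (by norm_num) |>.mpr hδ
  set M : ℝ := max 1 (1/((2:ℝ)^δ - 1)) with hM
  have hM1 : 1 ≤ M := le_max_left _ _
  have hx : (0:ℝ) < (2:ℝ)^δ - 1 := by linarith
  have hM2 : 1 ≤ M * ((2:ℝ)^δ - 1) := by
    calc (1:ℝ) = (1/((2:ℝ)^δ-1)) * ((2:ℝ)^δ-1) := by field_simp
      _ ≤ M * ((2:ℝ)^δ-1) := mul_le_mul_of_nonneg_right (le_max_right _ _) hx.le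
  set N : ℕ := ⌈(2:ℝ) ^ (1/δ)⌉₊ with hN
  refine ⟨M ^ (N+1), one_le_pow₀ hM1, fun k hk => ?_⟩
  -- termwise bound
  have hterm : ∀ p : ℕ, p.Prime → ∀ a : ℕ,
      (a + 1 : ℝ) ≤ (if (2:ℝ) ≤ (p:ℝ)^δ then 1 else M) * ((p:ℝ) ^ a) ^ δ := by
    intro p hp a
    have hp0 : (0:ℝ) < p := by exact_mod_cast hp.pos
    have hpow : ((p:ℝ) ^ a) ^ δ = ((p:ℝ)^δ) ^ a := by
      rw [← Real.rpow_natCast (p:ℝ) a, ← Real.rpow_natCast ((p:ℝ)^δ) a,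
        ← Real.rpow_mul hp0.le, ← Real.rpow_mul hp0.le, mul_comm]
    rw [hpow]
    split_ifs with hgood
    · rw [one_mul]
      calc (a + 1 : ℝ) ≤ 2 ^ a := by exact_mod_cast (Nat.lt_two_pow_self (n := a))
        _ ≤ ((p:ℝ)^δ) ^ a := by
          apply pow_le_pow_left₀ (by norm_num) hgood
    · have hp2 : (2:ℝ)^δ ≤ (p:ℝ)^δ :=
        Real.rpow_le_rpow (by norm_num) (by exact_mod_cast hp.two_le) hδ.le
      have hbern : 1 + (a:ℝ) * ((2:ℝ)^δ - 1) ≤ ((2:ℝ)^δ) ^ a := by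
        have := one_add_mul_le_pow (a := (2:ℝ)^δ - 1) (by linarith) a
        simpa using this
      have : (a + 1 : ℝ) ≤ M * (1 + (a:ℝ) * ((2:ℝ)^δ - 1)) := by
        have ha : (0:ℝ) ≤ a := Nat.cast_nonneg a
        nlinarith
      calc (a + 1 : ℝ) ≤ M * (1 + (a:ℝ) * ((2:ℝ)^δ - 1)) := this
        _ ≤ M * ((2:ℝ)^δ) ^ a := by
          apply mul_le_mul_of_nonneg_left hbern (by linarith)
        _ ≤ M * ((p:ℝ)^δ) ^ a := by
          apply mul_le_mul_of_nonneg_left _ (by linarith)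
          apply pow_le_pow_left₀ (by positivity) hp2
  have hcard : (k.divisors.card : ℝ) = ∏ p ∈ k.primeFactors, ((k.factorization p : ℝ) + 1) := by
    rw [Nat.card_divisors hk]
    push_cast
    rfl
  have hkfact : (k:ℝ) = ∏ p ∈ k.primeFactors, (p:ℝ) ^ (k.factorization p) := by
    conv_lhs => rw [← Nat.factorization_prod_pow_eq_self hk]
    push_cast
    rfl
  have hkprod : (k:ℝ) ^ δ = ∏ p ∈ k.primeFactors, ((p:ℝ) ^ (k.factorization p)) ^ δ := by
    rw [hkfact, ← Real.finset_prod_rpow _ _ (fun i _ => by positivity) δ]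
  rw [hcard, hkprod]
  calc ∏ p ∈ k.primeFactors, ((k.factorization p : ℝ) + 1)
      ≤ ∏ p ∈ k.primeFactors, (if (2:ℝ) ≤ (p:ℝ)^δ then 1 else M) * ((p:ℝ) ^ (k.factorization p)) ^ δ := by
        apply Finset.prod_le_prod (fun p _ => by positivity)
        intro p hp
        exact hterm p (Nat.prime_of_mem_primeFactors hp) _
    _ = (∏ p ∈ k.primeFactors, (if (2:ℝ) ≤ (p:ℝ)^δ then 1 else M)) *
        ∏ p ∈ k.primeFactors, ((p:ℝ) ^ (k.factorization p)) ^ δ := by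
        rw [Finset.prod_mul_distrib]
    _ ≤ M ^ (N+1) * ∏ p ∈ k.primeFactors, ((p:ℝ) ^ (k.factorization p)) ^ δ := by
        apply mul_le_mul_of_nonneg_right _ (Finset.prod_nonneg fun p _ => by positivity)
        have heq : ∏ p ∈ k.primeFactors, (if (2:ℝ) ≤ (p:ℝ)^δ then 1 else M)
            = M ^ (k.primeFactors.filter (fun p : ℕ => ¬ (2:ℝ) ≤ (p:ℝ)^δ)).card := by
          rw [Finset.prod_ite]
          simp [Finset.prod_const]
        rw [heq]
        apply pow_le_pow_right₀ hM1
        have hsub : k.primeFactors.filter (fun p : ℕ => ¬ (2:ℝ) ≤ (p:ℝ)^δ) ⊆ Finset.range (N+1) := by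
          intro p hp
          rw [Finset.mem_filter] at hp
          obtain ⟨hp1, hp2⟩ := hp
          push_neg at hp2
          have hppos : (0:ℝ) ≤ (p:ℝ) := Nat.cast_nonneg p
          have : (p:ℝ) < (2:ℝ) ^ (1/δ) := by
            have h1 : ((p:ℝ)^δ) ^ (1/δ) < ((2:ℝ)) ^ (1/δ) :=
              Real.rpow_lt_rpow (by positivity) hp2 (by positivity)
            rw [one_div] at h1 ⊢
            rwa [Real.rpow_rpow_inv hppos hδ.ne'] at h1
          have : (p:ℝ) < (N:ℝ) + 1 := lt_of_lt_of_le this ((Nat.le_ceil _).trans (by push_cast; linarith [Nat.le_ceil ((2:ℝ)^(1/δ))]))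
          have : p < N + 1 := by exact_mod_cast this
          exact Finset.mem_range.mpr this
        calc (k.primeFactors.filter (fun p : ℕ => ¬ (2:ℝ) ≤ (p:ℝ)^δ)).card
            ≤ (Finset.range (N+1)).card := Finset.card_le_card hsub
          _ = N + 1 := Finset.card_range _


private lemma pos_fac {x y : ℤ} (h : 0 < x * y) (hy : 0 < y) : 0 < x := by
  rcases mul_pos_iff.mp h with ⟨hx, _⟩ | ⟨_, hy'⟩
  · exact hx
  · linarith

lemma int_facts (M N A0 A1 A2 A3 : ℤ) (hM : 1 ≤ M) (hN : 1 ≤ N)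
    (h0 : 1 ≤ A0) (h01 : A0 ≤ A1) (h12 : A1 ≤ A2) (h23 : A2 ≤ A3)
    (E : M * (A0*A1*A2*A3) = N*(A1*A2*A3) + N*(A0*A2*A3) + N*(A0*A1*A3) + N*(A0*A1*A2)) :
    M * A0 ≤ 4*N ∧ A1 ≤ 3*N*A0 ∧ 0 < M*A0*A1 - N*A1 - N*A0 ∧
    0 < (M*A0*A1 - N*A1 - N*A0)*A2 - N*A0*A1 ∧
    ((M*A0*A1 - N*A1 - N*A0)*A2 - N*A0*A1) * ((M*A0*A1 - N*A1 - N*A0)*A3 - N*A0*A1)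
      = (N*A0*A1)^2 := by
  have h1 : 1 ≤ A1 := le_trans h0 h01
  have h2 : 1 ≤ A2 := le_trans h1 h12
  have h3 : 1 ≤ A3 := le_trans h2 h23
  have hN' : (0:ℤ) ≤ N := by linarith
  have hA0 : (0:ℤ) < A0 := by linarith
  have hA1 : (0:ℤ) < A1 := by linarith
  have hA2 : (0:ℤ) < A2 := by linarith
  have hA3 : (0:ℤ) < A3 := by linarith
  have h23pos : 0 < A2 * A3 := mul_pos hA2 hA3
  have h123pos : 0 < A1*A2*A3 := mul_pos (mul_pos hA1 hA2) hA3
  have F : (M*A0*A1 - N*A1 - N*A0) * (A2*A3) = N*A0*A1*(A2+A3) := by linear_combination E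
  have hQpos : 0 < N*A0*A1*(A2+A3) :=
    mul_pos (mul_pos (mul_pos (by linarith) hA0) hA1) (by linarith)
  have hc : 0 < M*A0*A1 - N*A1 - N*A0 := pos_fac (by rw [F]; exact hQpos) h23pos
  have hd : 0 < (M*A0*A1 - N*A1 - N*A0)*A2 - N*A0*A1 := by
    have hdA3 : ((M*A0*A1 - N*A1 - N*A0)*A2 - N*A0*A1) * A3 = N*A0*A1*A2 := by
      linear_combination F
    exact pos_fac (by rw [hdA3]; exact mul_pos (mul_pos (mul_pos (by linarith) hA0) hA1) hA2) hA3
  have hprod : ((M*A0*A1 - N*A1 - N*A0)*A2 - N*A0*A1) * ((M*A0*A1 - N*A1 - N*A0)*A3 - N*A0*A1)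
      = (N*A0*A1)^2 := by linear_combination (M*A0*A1 - N*A1 - N*A0) * F
  have t1 : A0*A2*A3 ≤ A1*A2*A3 :=
    mul_le_mul_of_nonneg_right (mul_le_mul_of_nonneg_right h01 hA2.le) hA3.le
  have t01 : A0*A1 ≤ A1*A2 := mul_le_mul h01 h12 hA1.le (by linarith)
  have t2 : A0*A1*A3 ≤ A1*A2*A3 := mul_le_mul_of_nonneg_right t01 hA3.le
  have t3 : A0*A1*A2 ≤ A1*A2*A3 := mul_le_mul t01 h23 hA2.le (mul_pos hA1 hA2).le
  have hF1 : M * A0 ≤ 4*N := by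
    have hmul : M*A0*(A1*A2*A3) ≤ 4*N*(A1*A2*A3) := by
      have u1 := mul_le_mul_of_nonneg_left t1 hN'
      have u2 := mul_le_mul_of_nonneg_left t2 hN'
      have u3 := mul_le_mul_of_nonneg_left t3 hN'
      linarith [E, u1, u2, u3]
    exact le_of_mul_le_mul_right hmul h123pos
  have hEq : (M*A0 - N) * (A1*A2*A3) = N*(A0*A2*A3) + N*(A0*A1*A3) + N*(A0*A1*A2) := by
    linear_combination E
  have hc1 : 1 ≤ M*A0 - N := by
    have : 0 < (M*A0 - N) * (A1*A2*A3) := by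
      rw [hEq]
      have v1 := mul_pos (mul_pos (mul_pos (by linarith : (0:ℤ) < N) hA0) hA2) hA3
      have v2 := mul_pos (mul_pos (mul_pos (by linarith : (0:ℤ) < N) hA0) hA1) hA3
      have v3 := mul_pos (mul_pos (mul_pos (by linarith : (0:ℤ) < N) hA0) hA1) hA2
      linarith [v1, v2, v3]
    exact pos_fac this h123pos
  have hF2 : A1 ≤ 3*N*A0 := by
    have s1 : A0*A1*A3 ≤ A0*A2*A3 :=
      mul_le_mul_of_nonneg_right (mul_le_mul_of_nonneg_left h12 hA0.le) hA3.le
    have s2 : A0*A1*A2 ≤ A0*A2*A3 :=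
      mul_le_mul (mul_le_mul_of_nonneg_left h12 hA0.le) h23 hA2.le (mul_pos hA0 hA2).le
    have hcancel : (M*A0 - N)*A1*(A2*A3) ≤ 3*N*A0*(A2*A3) := by
      have u1 := mul_le_mul_of_nonneg_left s1 hN'
      have u2 := mul_le_mul_of_nonneg_left s2 hN'
      linarith [hEq, u1, u2]
    have hcc : (M*A0 - N)*A1 ≤ 3*N*A0 := le_of_mul_le_mul_right hcancel h23pos
    have : A1 ≤ (M*A0 - N)*A1 := le_mul_of_one_le_left hA1.le hc1
    linarith
  exact ⟨hF1, hF2, hc, hd, hprod⟩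

lemma sol_E {m n : ℕ} (hn : 0 < n) {a : Fin 4 → ℕ}
    (hpos : ∀ i, 0 < a i)
    (hsum : (m : ℚ) / n = ∑ i, (1 : ℚ) / a i) :
    (m:ℤ) * (a 0 * a 1 * a 2 * a 3) = n*(a 1*a 2*a 3) + n*(a 0*a 2*a 3)
      + n*(a 0*a 1*a 3) + n*(a 0*a 1*a 2) := by
  have h0 : ((a 0 : ℚ)) ≠ 0 := by exact_mod_cast (hpos 0).ne'
  have h1 : ((a 1 : ℚ)) ≠ 0 := by exact_mod_cast (hpos 1).ne'
  have h2 : ((a 2 : ℚ)) ≠ 0 := by exact_mod_cast (hpos 2).ne'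
  have h3 : ((a 3 : ℚ)) ≠ 0 := by exact_mod_cast (hpos 3).ne'
  have hnq : ((n : ℚ)) ≠ 0 := by exact_mod_cast hn.ne'
  rw [Fin.sum_univ_four] at hsum
  have EQ : (m:ℚ) * (a 0 * a 1 * a 2 * a 3) = n*(a 1*a 2*a 3) + n*(a 0*a 2*a 3)
      + n*(a 0*a 1*a 3) + n*(a 0*a 1*a 2) := by
    field_simp at hsum
    linear_combination hsum
  exact_mod_cast EQ

lemma sol_facts {m n : ℕ} (hm : 0 < m) (hn : 0 < n) {a : Fin 4 → ℕ}
    (hpos : ∀ i, 0 < a i) (hmono : Monotone a)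
    (hsum : (m : ℚ) / n = ∑ i, (1 : ℚ) / a i) :
    m * a 0 ≤ 4 * n ∧ a 1 ≤ 3*n*(a 0) ∧
    0 < (m:ℤ)*(a 0)*(a 1) - n*(a 1) - n*(a 0) ∧
    0 < ((m:ℤ)*(a 0)*(a 1) - n*(a 1) - n*(a 0))*(a 2) - (n:ℤ)*(a 0)*(a 1) ∧
    (((m:ℤ)*(a 0)*(a 1) - n*(a 1) - n*(a 0))*(a 2) - (n:ℤ)*(a 0)*(a 1))
      ∣ ((n:ℤ)*(a 0)*(a 1))^2 := by
  have E := sol_E hn hpos hsum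
  have h01 : (a 0 : ℤ) ≤ a 1 := by exact_mod_cast hmono (by decide : (0:Fin 4) ≤ 1)
  have h12 : (a 1 : ℤ) ≤ a 2 := by exact_mod_cast hmono (by decide : (1:Fin 4) ≤ 2)
  have h23 : (a 2 : ℤ) ≤ a 3 := by exact_mod_cast hmono (by decide : (2:Fin 4) ≤ 3)
  obtain ⟨f1, f2, f3, f4, f5⟩ := int_facts (m:ℤ) (n:ℤ) (a 0) (a 1) (a 2) (a 3)
    (by exact_mod_cast hm) (by exact_mod_cast hn) (by exact_mod_cast hpos 0) h01 h12 h23 E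
  exact ⟨by exact_mod_cast f1, by exact_mod_cast f2, f3, f4, ⟨_, f5.symm⟩⟩

lemma count_bound (m n : ℕ) (hm : 0 < m) (hn : 0 < n) :
    numSols 4 m n ≤ ((Finset.Icc 1 (4*n/m)).sigma fun b0 =>
      (Finset.Icc 1 (3*n*b0)).sigma fun b1 => ((n*b0*b1)^2).divisors).card := by
  classical
  set T := ((Finset.Icc 1 (4*n/m)).sigma fun b0 =>
      (Finset.Icc 1 (3*n*b0)).sigma fun b1 => ((n*b0*b1)^2).divisors) with hT
  rw [numSols, ← Nat.card_eq_finsetCard]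
  have hmem : ∀ x : {a : Fin 4 → ℕ // (∀ i, 0 < a i) ∧ Monotone a ∧
      (m : ℚ) / n = ∑ i, (1 : ℚ) / a i},
      (⟨x.1 0, x.1 1, (((m:ℤ)*(x.1 0)*(x.1 1) - n*(x.1 1) - n*(x.1 0))*(x.1 2)
        - (n:ℤ)*(x.1 0)*(x.1 1)).toNat⟩ : (_ : ℕ) × (_ : ℕ) × ℕ) ∈ T := by
    intro x
    obtain ⟨hpos, hmono, hsum⟩ := x.2
    obtain ⟨f1, f2, f3, f4, f5⟩ := sol_facts hm hn hpos hmono hsum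
    rw [hT, Finset.mem_sigma, Finset.mem_sigma]
    refine ⟨Finset.mem_Icc.mpr ⟨hpos 0, ?_⟩, Finset.mem_Icc.mpr ⟨hpos 1, f2⟩, ?_⟩
    · rw [Nat.le_div_iff_mul_le hm, mul_comm]; exact f1
    · rw [Nat.mem_divisors]
      constructor
      · have hcast : ((((m:ℤ)*(x.1 0)*(x.1 1) - n*(x.1 1) - n*(x.1 0))*(x.1 2)
            - (n:ℤ)*(x.1 0)*(x.1 1)).toNat : ℤ) ∣ (((n*(x.1 0)*(x.1 1))^2 : ℕ) : ℤ) := by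
          rw [Int.toNat_of_nonneg f4.le]
          push_cast
          exact f5
        exact_mod_cast hcast
      · have hp : 0 < n*(x.1 0)*(x.1 1) := Nat.mul_pos (Nat.mul_pos hn (hpos 0)) (hpos 1)
        exact (pow_pos hp 2).ne'
  refine Nat.card_le_card_of_injective (fun x => (⟨_, hmem x⟩ : {y // y ∈ T})) ?_
  intro x y hxy
  obtain ⟨hposx, hmonox, hsumx⟩ := x.2
  obtain ⟨hposy, hmonoy, hsumy⟩ := y.2
  obtain ⟨fx1, fx2, fx3, fx4, fx5⟩ := sol_facts hm hn hposx hmonox hsumx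
  obtain ⟨fy1, fy2, fy3, fy4, fy5⟩ := sol_facts hm hn hposy hmonoy hsumy
  have h' := congrArg Subtype.val hxy
  injection h' with h0 hrest
  injection hrest with h1 hd
  have hdz : ((m:ℤ)*(x.1 0)*(x.1 1) - n*(x.1 1) - n*(x.1 0))*(x.1 2) - (n:ℤ)*(x.1 0)*(x.1 1)
      = ((m:ℤ)*(y.1 0)*(y.1 1) - n*(y.1 1) - n*(y.1 0))*(y.1 2) - (n:ℤ)*(y.1 0)*(y.1 1) := by
    rw [← Int.toNat_of_nonneg fx4.le, ← Int.toNat_of_nonneg fy4.le, hd]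
  have h0z : (x.1 0 : ℤ) = y.1 0 := by exact_mod_cast h0
  have h1z : (x.1 1 : ℤ) = y.1 1 := by exact_mod_cast h1
  rw [← h0z, ← h1z] at hdz
  have h2z : (x.1 2 : ℤ) = y.1 2 :=
    mul_left_cancel₀ fx3.ne' (by linarith)
  have h2 : x.1 2 = y.1 2 := by exact_mod_cast h2z
  -- recover the last coordinate
  have hx0 : ((x.1 0 : ℚ)) ≠ 0 := by exact_mod_cast (hposx 0).ne'
  have hx3 : ((x.1 3 : ℚ)) ≠ 0 := by exact_mod_cast (hposx 3).ne'
  have hy3 : ((y.1 3 : ℚ)) ≠ 0 := by exact_mod_cast (hposy 3).ne'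
  rw [Fin.sum_univ_four] at hsumx hsumy
  have hq0 : ((x.1 0 : ℚ)) = y.1 0 := by exact_mod_cast h0
  have hq1 : ((x.1 1 : ℚ)) = y.1 1 := by exact_mod_cast h1
  have hq2 : ((x.1 2 : ℚ)) = y.1 2 := by exact_mod_cast h2
  have hinv : (1:ℚ)/(x.1 3) = 1/(y.1 3) := by
    rw [hq0, hq1, hq2] at hsumx
    linarith [hsumx, hsumy]
  have h3 : x.1 3 = y.1 3 := by
    field_simp at hinv
    exact_mod_cast hinv.symm
  apply Subtype.ext
  funext i
  fin_cases i <;> assumption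

theorem stmt_16 : ∀ ε : ℝ, 0 < ε → ∃ C : ℝ, 0 < C ∧
    ∀ m n : ℕ, 0 < m → 0 < n →
      (numSols 4 m n : ℝ) ≤ C * (n : ℝ) ^ (3 + ε) / (m : ℝ) ^ 2 := by
  intro ε hε
  obtain ⟨C₀, hC₀1, hC₀⟩ := divisor_bound_s16 (δ := ε/8) (by linarith)
  have hC₀0 : 0 < C₀ := by linarith
  have h2304 : (0:ℝ) < (2304:ℝ) ^ (ε/8) := Real.rpow_pos_of_pos (by norm_num) _
  refine ⟨48 * C₀ * (2304:ℝ) ^ (ε/8), by positivity, ?_⟩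
  intro m n hm hn
  have hnR : (0:ℝ) < n := by exact_mod_cast hn
  have hmR : (0:ℝ) < m := by exact_mod_cast hm
  set A : ℕ := 4*n/m with hA
  set D : ℝ := C₀ * ((2304:ℝ) * (n:ℝ)^8) ^ (ε/8) with hD
  have hD0 : 0 ≤ D := by positivity
  -- uniform bound on each divisor count
  have hterm : ∀ b0 ∈ Finset.Icc 1 A, ∀ b1 ∈ Finset.Icc 1 (3*n*b0),
      ((((n*b0*b1)^2).divisors.card : ℝ)) ≤ D := by
    intro b0 hb0 b1 hb1
    rw [Finset.mem_Icc] at hb0 hb1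
    have hb0' : b0 ≤ 4*n := le_trans hb0.2 (Nat.div_le_self _ _)
    have hb1' : b1 ≤ 12*n^2 := le_trans hb1.2 (by nlinarith [hb0'])
    have hk0 : (n*b0*b1)^2 ≠ 0 := by
      have : 0 < n*b0*b1 := Nat.mul_pos (Nat.mul_pos hn hb0.1) hb1.1
      positivity
    have h48 : n*b0*b1 ≤ 48*n^4 := by
      calc n*b0*b1 ≤ n*(4*n)*(12*n^2) :=
            Nat.mul_le_mul (Nat.mul_le_mul_left _ hb0') hb1'
        _ = 48*n^4 := by ring
    have hkle : ((n*b0*b1)^2 : ℕ) ≤ 2304*n^8 := by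
      calc ((n*b0*b1)^2 : ℕ) ≤ (48*n^4)^2 := Nat.pow_le_pow_left h48 2
        _ = 2304*n^8 := by ring
    calc (((n*b0*b1)^2).divisors.card : ℝ) ≤ C₀ * (((n*b0*b1)^2 : ℕ) : ℝ) ^ (ε/8) :=
          hC₀ _ hk0
      _ ≤ C₀ * ((2304:ℝ) * (n:ℝ)^8) ^ (ε/8) := by
          apply mul_le_mul_of_nonneg_left _ hC₀0.le
          apply Real.rpow_le_rpow (by positivity) _ (by linarith)
          calc (((n*b0*b1)^2 : ℕ) : ℝ) ≤ ((2304*n^8 : ℕ) : ℝ) := by exact_mod_cast hkle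
            _ = (2304:ℝ) * (n:ℝ)^8 := by push_cast; ring
      _ = D := rfl
  -- sum the bound
  have hsum : ((((Finset.Icc 1 A).sigma fun b0 =>
      (Finset.Icc 1 (3*n*b0)).sigma fun b1 => ((n*b0*b1)^2).divisors).card : ℕ) : ℝ)
      ≤ (A : ℝ) * ((3*n*A : ℝ) * D) := by
    rw [Finset.card_sigma]
    push_cast
    calc ∑ b0 ∈ Finset.Icc 1 A, (((Finset.Icc 1 (3*n*b0)).sigma fun b1 =>
          ((n*b0*b1)^2).divisors).card : ℝ)
        ≤ ∑ b0 ∈ Finset.Icc 1 A, (3*(n:ℝ)*(A:ℝ)) * D := by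
          apply Finset.sum_le_sum
          intro b0 hb0
          rw [Finset.card_sigma]
          push_cast
          calc ∑ b1 ∈ Finset.Icc 1 (3*n*b0), ((((n*b0*b1)^2).divisors.card : ℕ) : ℝ)
              ≤ ∑ b1 ∈ Finset.Icc 1 (3*n*b0), D :=
                Finset.sum_le_sum (fun b1 hb1 => hterm b0 hb0 b1 hb1)
            _ = ((3*n*b0 : ℕ) : ℝ) * D := by
                rw [Finset.sum_const, Nat.card_Icc]
                simp [nsmul_eq_mul]
            _ ≤ (3*(n:ℝ)*(A:ℝ)) * D := by
                apply mul_le_mul_of_nonneg_right _ hD0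
                have hb0A : b0 ≤ A := (Finset.mem_Icc.mp hb0).2
                push_cast
                have : (b0:ℝ) ≤ (A:ℝ) := by exact_mod_cast hb0A
                nlinarith [hnR]
      _ = (Finset.Icc 1 A).card * ((3*(n:ℝ)*(A:ℝ)) * D) := by
          rw [Finset.sum_const, nsmul_eq_mul]
      _ = (A:ℝ) * ((3*(n:ℝ)*(A:ℝ)) * D) := by
          rw [Nat.card_Icc]; simp
  -- put it together
  have hAle : (A:ℝ) ≤ 4*(n:ℝ)/(m:ℝ) := by
    rw [le_div_iff₀ hmR]
    have : A * m ≤ 4*n := Nat.div_mul_le_self (4*n) m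
    exact_mod_cast this
  have hA0 : (0:ℝ) ≤ A := Nat.cast_nonneg A
  have hcb := count_bound m n hm hn
  rw [← hA] at hcb
  have key := le_trans ((Nat.cast_le (α := ℝ)).mpr hcb) hsum
  calc (numSols 4 m n : ℝ)
      ≤ (A : ℝ) * ((3*n*A : ℝ) * D) := key
    _ ≤ (4*(n:ℝ)/(m:ℝ)) * ((3*n*(4*(n:ℝ)/(m:ℝ))) * D) := by
        apply mul_le_mul hAle _ (by positivity) (by positivity)
        apply mul_le_mul_of_nonneg_right _ hD0
        push_cast
        nlinarith [hAle, hnR, hA0]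
    _ = 48 * C₀ * ((2304:ℝ) ^ (ε/8) * ((n:ℝ)^8) ^ (ε/8)) * (n:ℝ)^3 / (m:ℝ)^2 := by
        rw [hD, Real.mul_rpow (by norm_num) (by positivity)]
        field_simp
        ring
    _ = 48 * C₀ * (2304:ℝ) ^ (ε/8) * (n:ℝ) ^ (3 + ε) / (m:ℝ) ^ 2 := by
        rw [Real.rpow_add hnR]
        rw [← Real.rpow_natCast (n:ℝ) 8, ← Real.rpow_mul hnR.le,
          ← Real.rpow_natCast (n:ℝ) 3]
        norm_num
        ring
end
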